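/- Let ρ₁, ρ₂ : Matrix (Fin n) (Fin n) ℂ be density matrices (positive semidefinite with trace 1), and suppose there exist matrices A₁, …, A_m : Matrix (Fin n) (Fin n) ℂ with ∑ᵢ Aᵢᴴ·Aᵢ = 1 and ∑ᵢ Aᵢ·Aᵢᴴ = 1 such that ρ₁ = ∑ᵢ Aᵢ·ρ₂·Aᵢᴴ. Then λ(ρ₁) is majorized by λ(ρ₂): for every k ≤ n, the sum of the k largest eigenvalues of ρ₁ is at most the sum of the k largest eigenvalues of ρ₂ (counted with multiplicity, eigenvalues taken via the Hermitian spectral theorem), and the total sums of eigenvalues are equal (both equal 1). -/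

import Mathlib

open Matrix ComplexOrder

lemma card_filter_fin_lt {n k : ℕ} (hkn : k ≤ n) :
    (Finset.univ.filter fun i : Fin n => (i : ℕ) < k).card = k := by
  rw [Finset.card_filter, Fin.sum_univ_eq_sum_range (fun j => if j < k then 1 else 0) n,
    ← Finset.card_filter]
  have : (Finset.range n).filter (fun j => j < k) = Finset.range k := by
    ext j; simp only [Finset.mem_filter, Finset.mem_range]; omega
  rw [this, Finset.card_range]

lemma maj_step {n k : ℕ} (hk1 : 1 ≤ k) (hkn : k ≤ n) (μ c : Fin n → ℝ)
    (hmono : Antitone μ) (hc0 : ∀ i, 0 ≤ c i) (hc1 : ∀ i, c i ≤ 1)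
    (hsum : ∑ i, c i = (k : ℝ)) :
    ∑ i, c i * μ i ≤ ∑ i ∈ Finset.univ.filter (fun i : Fin n => (i : ℕ) < k), μ i := by
  have hkn' : k - 1 < n := by omega
  set t := μ ⟨k - 1, hkn'⟩ with ht
  have key : ∑ i, c i * (μ i - t) ≤
      ∑ i ∈ Finset.univ.filter (fun i : Fin n => (i : ℕ) < k), (μ i - t) := by
    rw [← Finset.sum_filter_add_sum_filter_not Finset.univ
      (fun i : Fin n => (i : ℕ) < k) (fun i => c i * (μ i - t))]
    have hA : ∑ i ∈ Finset.univ.filter (fun i : Fin n => (i : ℕ) < k), c i * (μ i - t) ≤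
        ∑ i ∈ Finset.univ.filter (fun i : Fin n => (i : ℕ) < k), (μ i - t) := by
      refine Finset.sum_le_sum fun i hi => ?_
      have hik : (i : ℕ) < k := (Finset.mem_filter.mp hi).2
      have hle : i ≤ (⟨k - 1, hkn'⟩ : Fin n) := by
        rw [Fin.le_def]; simp; omega
      have hmt : t ≤ μ i := hmono hle
      nlinarith [hc1 i, hc0 i]
    have hB : ∑ i ∈ Finset.univ.filter (fun i : Fin n => ¬ (i : ℕ) < k), c i * (μ i - t) ≤ 0 := by
      refine Finset.sum_nonpos fun i hi => ?_
      have hik : ¬ (i : ℕ) < k := (Finset.mem_filter.mp hi).2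
      have hle : (⟨k - 1, hkn'⟩ : Fin n) ≤ i := by
        rw [Fin.le_def]; simp; omega
      have hmt : μ i ≤ t := hmono hle
      exact mul_nonpos_of_nonneg_of_nonpos (hc0 i) (by linarith)
    linarith
  have hcard := card_filter_fin_lt (n := n) hkn
  have e1 : ∑ i, c i * (μ i - t) = ∑ i, c i * μ i - t * k := by
    rw [Finset.sum_congr rfl fun i _ => mul_sub (c i) (μ i) t, Finset.sum_sub_distrib,
      ← Finset.sum_mul, hsum]; ring
  have e2 : ∑ i ∈ Finset.univ.filter (fun i : Fin n => (i : ℕ) < k), (μ i - t) =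
      (∑ i ∈ Finset.univ.filter (fun i : Fin n => (i : ℕ) < k), μ i) - t * k := by
    rw [Finset.sum_sub_distrib, Finset.sum_const, hcard, nsmul_eq_mul, mul_comm]
  rw [e1, e2] at key
  linarith

lemma posSemidef_sum {n : ℕ} {ι : Type*} (s : Finset ι) (f : ι → Matrix (Fin n) (Fin n) ℂ)
    (h : ∀ i ∈ s, (f i).PosSemidef) : (∑ i ∈ s, f i).PosSemidef := by
  classical
  induction s using Finset.cons_induction with
  | empty => simpa using Matrix.PosSemidef.zero
  | cons a s ha ih =>
    rw [Finset.sum_cons]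
    exact ((h a (Finset.mem_cons_self a s)).add
      (ih fun i hi => h i (Finset.mem_cons_of_mem hi)))

lemma trace_eq_sum_eigenvalues {n : ℕ} {M : Matrix (Fin n) (Fin n) ℂ} (hM : M.IsHermitian) :
    M.trace = ∑ i, (hM.eigenvalues i : ℂ) := by
  conv_lhs => rw [hM.spectral_theorem]
  simp only [Unitary.conjStarAlgAut_apply, Unitary.coe_star]
  rw [trace_mul_cycle]
  rw [show (star (hM.eigenvectorUnitary : Matrix (Fin n) (Fin n) ℂ)) *
      (hM.eigenvectorUnitary : Matrix (Fin n) (Fin n) ℂ) = 1 from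
    Matrix.mem_unitaryGroup_iff'.mp hM.eigenvectorUnitary.2, one_mul, trace_diagonal]
  rfl

lemma psd_diag_nonneg {n : ℕ} {M : Matrix (Fin n) (Fin n) ℂ} (hM : M.PosSemidef) (j : Fin n) :
    0 ≤ M j j := by
  exact hM.diag_nonneg

theorem eigenvalues_majorized_of_bistochastic {n : ℕ}
    (ρ₁ ρ₂ : Matrix (Fin n) (Fin n) ℂ)
    (h1 : ρ₁.PosSemidef) (h2 : ρ₂.PosSemidef)
    (ht1 : ρ₁.trace = 1) (ht2 : ρ₂.trace = 1)
    {m : ℕ} (A : Fin m → Matrix (Fin n) (Fin n) ℂ)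
    (hA1 : ∑ i, (A i)ᴴ * A i = 1) (hA2 : ∑ i, A i * (A i)ᴴ = 1)
    (hρ : ρ₁ = ∑ i, A i * ρ₂ * (A i)ᴴ) :
    ∀ σ τ : Equiv.Perm (Fin n),
      Antitone (fun i => h1.isHermitian.eigenvalues (σ i)) →
      Antitone (fun i => h2.isHermitian.eigenvalues (τ i)) →
      (∀ k : ℕ, k ≤ n →
        ∑ i ∈ Finset.univ.filter (fun i : Fin n => (i : ℕ) < k),
            h1.isHermitian.eigenvalues (σ i) ≤
          ∑ i ∈ Finset.univ.filter (fun i : Fin n => (i : ℕ) < k),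
            h2.isHermitian.eigenvalues (τ i)) ∧
      ∑ i, h1.isHermitian.eigenvalues i = ∑ i, h2.isHermitian.eigenvalues i := by
  intro σ τ hσ hτ
  set lam1 := h1.isHermitian.eigenvalues with hlam1
  set lam2 := h2.isHermitian.eigenvalues with hlam2
  set U := (h1.isHermitian.eigenvectorUnitary : Matrix (Fin n) (Fin n) ℂ) with hUdef
  set W := (h2.isHermitian.eigenvectorUnitary : Matrix (Fin n) (Fin n) ℂ) with hWdef
  have hU1 : U * Uᴴ = 1 := by
    rw [← star_eq_conjTranspose]
    exact Matrix.mem_unitaryGroup_iff.mp h1.isHermitian.eigenvectorUnitary.2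
  have hU2 : Uᴴ * U = 1 := by
    rw [← star_eq_conjTranspose]
    exact Matrix.mem_unitaryGroup_iff'.mp h1.isHermitian.eigenvectorUnitary.2
  have hW1 : W * Wᴴ = 1 := by
    rw [← star_eq_conjTranspose]
    exact Matrix.mem_unitaryGroup_iff.mp h2.isHermitian.eigenvectorUnitary.2
  have hW2 : Wᴴ * W = 1 := by
    rw [← star_eq_conjTranspose]
    exact Matrix.mem_unitaryGroup_iff'.mp h2.isHermitian.eigenvectorUnitary.2
  set D1 := (diagonal (RCLike.ofReal ∘ lam1) : Matrix (Fin n) (Fin n) ℂ) with hD1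
  set D2 := (diagonal (RCLike.ofReal ∘ lam2) : Matrix (Fin n) (Fin n) ℂ) with hD2
  have hsp1 : ρ₁ = U * D1 * Uᴴ := by
    rw [← star_eq_conjTranspose]; exact h1.isHermitian.spectral_theorem
  have hsp2 : ρ₂ = W * D2 * Wᴴ := by
    rw [← star_eq_conjTranspose]; exact h2.isHermitian.spectral_theorem
  -- total sums
  have htot : ∑ i, lam1 i = ∑ i, lam2 i := by
    have e1 : ((∑ i, lam1 i : ℝ) : ℂ) = 1 := by
      rw [Complex.ofReal_sum, ← trace_eq_sum_eigenvalues h1.isHermitian]; exact ht1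
    have e2 : ((∑ i, lam2 i : ℝ) : ℂ) = 1 := by
      rw [Complex.ofReal_sum, ← trace_eq_sum_eigenvalues h2.isHermitian]; exact ht2
    exact_mod_cast e1.trans e2.symm
  refine ⟨fun k hk => ?_, htot⟩
  rcases Nat.eq_zero_or_pos k with hk0 | hk1
  · subst hk0; simp
  -- main case
  set e : Fin n → ℂ := fun j => if ((σ.symm j : Fin n) : ℕ) < k then 1 else 0 with he
  set P := U * diagonal e * Uᴴ with hP
  set Q := ∑ i, (A i)ᴴ * P * A i with hQ
  set C := Wᴴ * Q * W with hC
  set c : Fin n → ℝ := fun j => (C j j).re with hc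
  have htrconj : ∀ (V X : Matrix (Fin n) (Fin n) ℂ), Vᴴ * V = 1 →
      (V * X * Vᴴ).trace = X.trace := by
    intro V X hV
    rw [trace_mul_cycle, hV, one_mul]
  -- T1
  have T1 : (P * ρ₁).trace =
      ∑ i ∈ Finset.univ.filter (fun i : Fin n => (i : ℕ) < k), ((lam1 (σ i) : ℝ) : ℂ) := by
    have hPρ : P * ρ₁ = U * (diagonal e * D1) * Uᴴ := by
      rw [hsp1, hP]
      simp only [Matrix.mul_assoc]
      rw [show Uᴴ * (U * (D1 * Uᴴ)) = D1 * Uᴴ by rw [← Matrix.mul_assoc, hU2, one_mul]]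
    rw [hPρ, htrconj _ _ hU2, hD1, diagonal_mul_diagonal, trace_diagonal]
    rw [Finset.sum_filter]
    refine Fintype.sum_equiv σ.symm _ _ fun j => ?_
    simp only [he, Function.comp, Equiv.apply_symm_apply, ite_mul, one_mul, zero_mul]
    rfl
  -- T2
  have T2 : (P * ρ₁).trace = (Q * ρ₂).trace := by
    calc (P * ρ₁).trace = ∑ i, (P * (A i * ρ₂ * (A i)ᴴ)).trace := by
          rw [hρ, Finset.mul_sum, trace_sum]
      _ = ∑ i, (((A i)ᴴ * P * A i) * ρ₂).trace := by
          refine Finset.sum_congr rfl fun i _ => ?_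
          rw [show P * (A i * ρ₂ * (A i)ᴴ) = P * (A i * ρ₂) * (A i)ᴴ by
            simp only [Matrix.mul_assoc]]
          rw [trace_mul_cycle]
          simp only [Matrix.mul_assoc]
      _ = (Q * ρ₂).trace := by rw [hQ, ← trace_sum, ← Finset.sum_mul]
  -- T3
  have T3 : (Q * ρ₂).trace = ∑ j, C j j * ((lam2 j : ℝ) : ℂ) := by
    have hmove : W * ((Wᴴ * Q * W) * D2) * Wᴴ = Q * (W * D2 * Wᴴ) := by
      simp only [← Matrix.mul_assoc]
      rw [show W * Wᴴ * Q = Q by rw [hW1, one_mul]]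
    rw [hsp2, ← hmove]
    rw [htrconj _ _ hW2]
    rw [Matrix.trace]
    refine Finset.sum_congr rfl fun j _ => ?_
    rw [Matrix.diag_apply, mul_diagonal]
    rfl
  -- positivity facts
  have hEpsd : (diagonal e).PosSemidef := by
    refine PosSemidef.diagonal fun j => ?_
    simp only [he]; split <;> simp
  have hPpsd : P.PosSemidef := hEpsd.mul_mul_conjTranspose_same U
  have hQpsd : Q.PosSemidef :=
    posSemidef_sum _ _ fun i _ => hPpsd.conjTranspose_mul_mul_same (A i)
  have hCpsd : C.PosSemidef := hQpsd.conjTranspose_mul_mul_same W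
  have h1Ppsd : (1 - P).PosSemidef := by
    have h1Pe : 1 - P = U * diagonal (fun j => 1 - e j) * Uᴴ := by
      have : (diagonal (fun j => 1 - e j) : Matrix (Fin n) (Fin n) ℂ) = 1 - diagonal e := by
        rw [← diagonal_one, diagonal_sub]
      rw [this, Matrix.mul_sub, Matrix.sub_mul, Matrix.mul_one, hU1, hP]
    rw [h1Pe]
    refine (PosSemidef.diagonal fun j => ?_).mul_mul_conjTranspose_same U
    simp only [he]; split <;> simp
  have h1Qpsd : (1 - Q).PosSemidef := by
    have : ∑ i, (A i)ᴴ * (1 - P) * A i = 1 - Q := by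
      simp only [Matrix.mul_sub, Matrix.sub_mul, Matrix.mul_one, Finset.sum_sub_distrib]
      rw [hA1, hQ]
    rw [← this]
    exact posSemidef_sum _ _ fun i _ => h1Ppsd.conjTranspose_mul_mul_same (A i)
  have h1Cpsd : (1 - C).PosSemidef := by
    have : Wᴴ * (1 - Q) * W = 1 - C := by
      rw [Matrix.mul_sub, Matrix.mul_one, Matrix.sub_mul, hW2, hC]
    rw [← this]
    exact h1Qpsd.conjTranspose_mul_mul_same W
  -- diagonal entries of C
  have hCj : ∀ j, C j j = ((c j : ℝ) : ℂ) := by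
    intro j
    have h0 := psd_diag_nonneg hCpsd j
    rw [Complex.le_def] at h0
    apply Complex.ext
    · simp [hc]
    · simp [← h0.2]
  have hc0 : ∀ j, 0 ≤ c j := by
    intro j
    have h0 := psd_diag_nonneg hCpsd j
    rw [Complex.le_def] at h0
    simpa [hc] using h0.1
  have hc1 : ∀ j, c j ≤ 1 := by
    intro j
    have h0 := psd_diag_nonneg h1Cpsd j
    rw [Complex.le_def] at h0
    have := h0.1
    simp only [Matrix.sub_apply, Matrix.one_apply_eq, Complex.zero_re, Complex.sub_re,
      Complex.one_re] at this
    simpa [hc] using this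
  -- trace of Q equals k
  have htrP : P.trace = (k : ℂ) := by
    rw [hP, htrconj _ _ hU2, trace_diagonal]
    have : ∑ j, e j = ∑ i : Fin n, (if (i : ℕ) < k then (1 : ℂ) else 0) := by
      refine Fintype.sum_equiv σ.symm _ _ fun j => ?_
      simp [he]
    rw [this, Finset.sum_boole, card_filter_fin_lt hk]
  have htrQ : Q.trace = (k : ℂ) := by
    have : Q.trace = ∑ i, (P * (A i * (A i)ᴴ)).trace := by
      rw [hQ, trace_sum]
      refine Finset.sum_congr rfl fun i _ => ?_
      rw [trace_mul_cycle, trace_mul_comm]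
    rw [this, ← trace_sum, ← Finset.mul_sum, hA2, Matrix.mul_one, htrP]
  have htrC : C.trace = (k : ℂ) := by
    rw [hC, trace_mul_cycle, show W * Wᴴ * Q = Q by rw [hW1, one_mul], htrQ]
  have hcsum : ∑ j, c j = (k : ℝ) := by
    have : ((∑ j, c j : ℝ) : ℂ) = ((k : ℝ) : ℂ) := by
      push_cast
      rw [← Finset.sum_congr rfl fun j _ => hCj j]
      rw [show (∑ j, C j j) = C.trace from rfl, htrC]
    exact_mod_cast this
  -- the key real identity
  have hkey : ∑ i ∈ Finset.univ.filter (fun i : Fin n => (i : ℕ) < k), lam1 (σ i) =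
      ∑ j, c j * lam2 j := by
    have hcplx := T1.symm.trans (T2.trans T3)
    rw [Finset.sum_congr rfl fun j (_ : j ∈ Finset.univ) => by rw [hCj j]] at hcplx
    have : ((∑ i ∈ Finset.univ.filter (fun i : Fin n => (i : ℕ) < k), lam1 (σ i) : ℝ) : ℂ) =
        ((∑ j, c j * lam2 j : ℝ) : ℂ) := by
      push_cast
      exact hcplx
    exact_mod_cast this
  rw [hkey]
  calc ∑ j, c j * lam2 j = ∑ i, c (τ i) * lam2 (τ i) :=
        (Equiv.sum_comp τ (fun j => c j * lam2 j)).symm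
    _ ≤ ∑ i ∈ Finset.univ.filter (fun i : Fin n => (i : ℕ) < k), lam2 (τ i) := by
        refine maj_step hk1 hk _ _ hτ (fun i => hc0 _) (fun i => hc1 _) ?_
        rw [Equiv.sum_comp τ c, hcsum]
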